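/- Let G be an abelian Polish group and let H be a meager subgroup of G. Then there exists a nonempty perfect set P ⊆ G which intersects each coset of H in at most one point; equivalently, for all distinct x, y ∈ P, x − y ∉ H. -/

import Mathlib

set_option linter.unusedSectionVars false

open Set Metric

section Aux

variable {G : Type*} [AddCommGroup G] [MetricSpace G] [IsTopologicalAddGroup G]

lemma isMeagre_biUnion_finset {ι : Type*} {s : Finset ι} {f : ι → Set G}
    (h : ∀ i ∈ s, IsMeagre (f i)) : IsMeagre (⋃ i ∈ s, f i) := by
  rw [IsMeagre, compl_iUnion₂]
  exact (Filter.biInter_finset_mem s).mpr h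

lemma isMeagre_union {s t : Set G} (hs : IsMeagre s) (ht : IsMeagre t) : IsMeagre (s ∪ t) := by
  rw [IsMeagre, compl_union]
  exact Filter.inter_mem hs ht

lemma pick_point [CompleteSpace G] {U : Set G} (hU : IsOpen U) (hne : U.Nonempty)
    {B : Set G} (hB : IsMeagre B) : ∃ y ∈ U, y ∉ B := by
  obtain ⟨y, hyB, hyU⟩ := (dense_of_mem_residual hB).exists_mem_open hU hne
  exact ⟨y, hyU, hyB⟩

lemma isMeagre_sub_right {B : Set G} (hB : IsMeagre B) (a : G) :
    IsMeagre {y : G | y - a ∈ B} :=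
  hB.preimage_of_isOpenMap (continuous_id.sub continuous_const)
    (Homeomorph.subRight a).isOpenMap

lemma isMeagre_sub_left {B : Set G} (hB : IsMeagre B) (a : G) :
    IsMeagre {y : G | a - y ∈ B} :=
  hB.preimage_of_isOpenMap (continuous_const.sub continuous_id)
    (Homeomorph.subLeft a).isOpenMap

lemma exists_sep [CompleteSpace G]
    {ι : Type*} [DecidableEq ι] (s : Finset ι) (c : ι → G) {ε : ℝ} (hε : 0 < ε)
    {B : Set G} (hB : IsMeagre B) :
    ∃ g : ι → G, ∀ i ∈ s, dist (g i) (c i) < ε ∧ ∀ j ∈ s, i ≠ j → g i - g j ∉ B := by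
  classical
  induction s using Finset.induction_on with
  | empty => exact ⟨c, by simp⟩
  | @insert a s ha IH =>
    obtain ⟨g, hg⟩ := IH
    set Bad : Set G := ⋃ j ∈ s, ({y : G | y - g j ∈ B} ∪ {y : G | g j - y ∈ B}) with hBad
    have hBadM : IsMeagre Bad :=
      isMeagre_biUnion_finset fun j _ =>
        isMeagre_union (isMeagre_sub_right hB (g j)) (isMeagre_sub_left hB (g j))
    obtain ⟨y, hyU, hyB⟩ := pick_point (isOpen_ball (x := c a) (ε := ε)) (nonempty_ball.mpr hε) hBadM
    refine ⟨Function.update g a y, ?_⟩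
    intro i hi
    rcases Finset.mem_insert.mp hi with rfl | his
    · refine ⟨by rwa [Function.update_self, ← mem_ball], ?_⟩
      intro j hj hij
      rcases Finset.mem_insert.mp hj with rfl | hjs
      · exact absurd rfl hij
      · have hja : j ≠ i := fun h => ha (h ▸ hjs)
        rw [Function.update_self, Function.update_of_ne hja]
        intro hmem
        exact hyB (mem_iUnion₂.mpr ⟨j, hjs, Or.inl hmem⟩)
    · have hia : i ≠ a := fun h => ha (h ▸ his)
      refine ⟨by rw [Function.update_of_ne hia]; exact (hg i his).1, ?_⟩
      intro j hj hij
      rcases Finset.mem_insert.mp hj with rfl | hjs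
      · rw [Function.update_of_ne hia, Function.update_self]
        intro hmem
        exact hyB (mem_iUnion₂.mpr ⟨i, his, Or.inr hmem⟩)
      · have hja : j ≠ a := fun h => ha (h ▸ hjs)
        rw [Function.update_of_ne hia, Function.update_of_ne hja]
        exact (hg i his).2 j hjs hij

end Aux

section Step

variable {G : Type*} [AddCommGroup G] [MetricSpace G] [IsTopologicalAddGroup G]

lemma step_lemma [CompleteSpace G] (hzero : IsMeagre ({(0:G)} : Set G))
    {F : Set G} (hFc : IsClosed F) (hFm : IsMeagre F)
    (n : ℕ) (x : (Fin n → Bool) → G) {ε : ℝ} (hε : 0 < ε) :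
    ∃ (x' : ((Fin (n+1) → Bool) → G)) (ε' : ℝ),
      0 < ε' ∧ ε' ≤ ε / 2 ∧
      (∀ s, dist (x' s) (x (Fin.init s)) + ε' ≤ ε) ∧
      (∀ s t : Fin (n+1) → Bool, s ≠ t → ∀ u v : G,
        dist u (x' s) ≤ ε' → dist v (x' t) ≤ ε' → u ≠ v ∧ u - v ∉ F) := by
  classical
  set B : Set G := F ∪ {0} with hBdef
  have hBc : IsClosed B := hFc.union isClosed_singleton
  have hBm : IsMeagre B := isMeagre_union hFm hzero
  obtain ⟨g, hg⟩ := exists_sep (G := G) (ι := Fin (n+1) → Bool) Finset.univ (fun s => x (Fin.init s))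
    (by positivity : (0:ℝ) < ε / 4) hBm
  have hgd : ∀ s, dist (g s) (x (Fin.init s)) < ε / 4 := fun s => (hg s (Finset.mem_univ _)).1
  have hgs : ∀ s t, s ≠ t → g s - g t ∉ B := fun s t hst =>
    (hg s (Finset.mem_univ _)).2 t (Finset.mem_univ _) hst
  have hδ : ∀ p : ((Fin (n+1) → Bool) × (Fin (n+1) → Bool)), ∃ δ : ℝ, 0 < δ ∧
      (p.1 ≠ p.2 → ∀ u v : G, dist u (g p.1) ≤ δ → dist v (g p.2) ≤ δ → u - v ∉ B) := by
    rintro ⟨s, t⟩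
    by_cases hst : s = t
    · exact ⟨1, one_pos, fun h => absurd hst h⟩
    · have hUopen : IsOpen {q : G × G | q.1 - q.2 ∉ B} :=
        hBc.isOpen_compl.preimage (continuous_fst.sub continuous_snd)
      have hmem : (g s, g t) ∈ {q : G × G | q.1 - q.2 ∉ B} := hgs s t hst
      obtain ⟨r, hr, hball⟩ := Metric.isOpen_iff.mp hUopen _ hmem
      refine ⟨r / 2, by positivity, fun _ u v hu hv => ?_⟩
      have : (u, v) ∈ {q : G × G | q.1 - q.2 ∉ B} := by
        refine hball ?_
        rw [Metric.mem_ball, Prod.dist_eq]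
        exact max_lt (lt_of_le_of_lt hu (by linarith)) (lt_of_le_of_lt hv (by linarith))
      exact this
  choose δ hδpos hδspec using hδ
  have hne : (Finset.univ : Finset ((Fin (n+1) → Bool) × (Fin (n+1) → Bool))).Nonempty :=
    ⟨((fun _ => false), (fun _ => false)), Finset.mem_univ _⟩
  set ε' : ℝ := min (ε/4) (Finset.univ.inf' hne δ) with hε'def
  have hε'4 : ε' ≤ ε / 4 := min_le_left _ _
  refine ⟨g, ε', ?_, ?_, ?_, ?_⟩
  · exact lt_min (by positivity) ((Finset.lt_inf'_iff _).mpr fun p _ => hδpos p)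
  · linarith
  · intro s
    have h1 := hgd s
    linarith
  · intro s t hst u v hu hv
    have hle : ε' ≤ δ (s, t) :=
      le_trans (min_le_right _ _) (Finset.inf'_le _ (Finset.mem_univ _))
    have hB' : u - v ∉ B := hδspec (s, t) hst u v (le_trans hu hle) (le_trans hv hle)
    constructor
    · intro huv
      exact hB' (by rw [huv, sub_self]; exact Or.inr rfl)
    · exact fun hF => hB' (Or.inl hF)

end Step

section Master

open Filter Topology

variable {G : Type*} [AddCommGroup G] [MetricSpace G] [IsTopologicalAddGroup G]

lemma master [CompleteSpace G] (hzero : IsMeagre ({(0:G)} : Set G))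
    {F : ℕ → Set G} (hFc : ∀ n, IsClosed (F n)) (hFm : ∀ n, IsMeagre (F n))
    (hFmono : Monotone F) :
    ∃ P : Set G, P.Nonempty ∧ Perfect P ∧
      ∀ x ∈ P, ∀ y ∈ P, x ≠ y → x - y ∉ ⋃ n, F n := by
  classical
  -- extract step data
  have hstep := fun (n : ℕ) (p : ((Fin n → Bool) → G) × ℝ) (hp : 0 < p.2) =>
    step_lemma hzero (hFc n) (hFm n) n p.1 hp
  choose s1 s2 hpos hhalf hnest hsep using hstep
  -- iterate
  obtain ⟨x, ε, hε0, hεpos, hεhalf, hxnest, hxsep⟩ :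
      ∃ (x : ∀ n, (Fin n → Bool) → G) (ε : ℕ → ℝ), ε 0 = 1 ∧ (∀ n, 0 < ε n) ∧
        (∀ n, ε (n+1) ≤ ε n / 2) ∧
        (∀ n (s : Fin (n+1) → Bool), dist (x (n+1) s) (x n (Fin.init s)) + ε (n+1) ≤ ε n) ∧
        (∀ n (s t : Fin (n+1) → Bool), s ≠ t → ∀ u v : G,
          dist u (x (n+1) s) ≤ ε (n+1) → dist v (x (n+1) t) ≤ ε (n+1) →
            u ≠ v ∧ u - v ∉ F n) := by
    let D : ∀ n, PSigma fun p : ((Fin n → Bool) → G) × ℝ => 0 < p.2 := fun n =>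
      Nat.rec ⟨((fun _ => (0:G)), 1), one_pos⟩
        (fun n q => ⟨(s1 n q.1 q.2, s2 n q.1 q.2), hpos n q.1 q.2⟩) n
    have hD : ∀ n, D (n+1) =
        ⟨(s1 n (D n).1 (D n).2, s2 n (D n).1 (D n).2), hpos n (D n).1 (D n).2⟩ :=
      fun n => rfl
    refine ⟨fun n => (D n).1.1, fun n => (D n).1.2, rfl, fun n => (D n).2,
      fun n => ?_, fun n => ?_, fun n => ?_⟩
    · beta_reduce; rw [hD n]; exact hhalf n (D n).1 (D n).2
    · beta_reduce; rw [hD n]; exact hnest n (D n).1 (D n).2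
    · beta_reduce; rw [hD n]; exact hsep n (D n).1 (D n).2
  -- bounds on ε
  have hεbound : ∀ n, ε n ≤ (1/2 : ℝ)^n := by
    intro n
    induction n with
    | zero => simp [hε0]
    | succ n ih =>
      have := hεhalf n
      have h2 : ((1:ℝ)/2)^(n+1) = (1/2)^n / 2 := by ring
      rw [h2]; linarith
  have hεtend : Tendsto ε atTop (𝓝 0) :=
    squeeze_zero (fun n => (hεpos n).le) hεbound
      (tendsto_pow_atTop_nhds_zero_of_lt_one (by norm_num) (by norm_num))
  -- restrictions
  have hinit : ∀ (σ : ℕ → Bool) (n : ℕ),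
      Fin.init (fun i : Fin (n+1) => σ i) = fun i : Fin n => σ i := by
    intro σ n
    funext i
    simp [Fin.init]
  -- the approximating sequence for each branch
  set y : (ℕ → Bool) → ℕ → G := fun σ n => x n (fun i : Fin n => σ i) with hydef
  have hchain : ∀ (σ : ℕ → Bool) (n m : ℕ), n ≤ m → dist (y σ m) (y σ n) + ε m ≤ ε n := by
    intro σ n m hnm
    induction m, hnm using Nat.le_induction with
    | base => simp
    | succ m hnm ih =>
      have h1 := hxnest m (fun i : Fin (m+1) => σ i)
      rw [hinit σ m] at h1
      have h2 := dist_triangle (y σ (m+1)) (y σ m) (y σ n)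
      have h3 : dist (y σ (m+1)) (y σ m) + ε (m+1) ≤ ε m := h1
      linarith
  have hcauchy : ∀ σ : ℕ → Bool, ∃ a : G, Tendsto (y σ) atTop (𝓝 a) := by
    intro σ
    refine cauchySeq_tendsto_of_complete ?_
    refine cauchySeq_of_le_geometric (1/2) 1 (by norm_num) fun n => ?_
    have h1 := hchain σ n (n+1) (Nat.le_succ n)
    have h2 := hεpos (n+1)
    have h3 := hεbound n
    rw [dist_comm]
    calc dist (y σ (n+1)) (y σ n) ≤ ε n := by linarith
    _ ≤ 1 * (1/2)^n := by linarith
  choose φ hφt using hcauchy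
  have hmem : ∀ (σ : ℕ → Bool) (n : ℕ), dist (φ σ) (y σ n) ≤ ε n := by
    intro σ n
    refine le_of_tendsto ((hφt σ).dist (tendsto_const_nhds (x := y σ n))) ?_
    filter_upwards [eventually_ge_atTop n] with m hm
    have := hchain σ n m hm
    have := hεpos m
    linarith
  have hdiff : ∀ σ τ : ℕ → Bool, σ ≠ τ → ∀ m, φ σ ≠ φ τ ∧ φ σ - φ τ ∉ F m := by
    intro σ τ hne m
    have : ∃ k, σ k ≠ τ k := by
      by_contra h
      push_neg at h
      exact hne (funext h)
    obtain ⟨k, hk⟩ := this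
    set n := max m k with hn
    have hst : (fun i : Fin (n+1) => σ i) ≠ (fun i : Fin (n+1) => τ i) := by
      intro h
      have := congrFun h ⟨k, Nat.lt_succ_of_le (le_max_right m k)⟩
      exact hk this
    have h := hxsep n _ _ hst (φ σ) (φ τ) (hmem σ (n+1)) (hmem τ (n+1))
    exact ⟨h.1, fun hFm' => h.2 (hFmono (le_max_left m k) hFm')⟩
  have hclose : ∀ (σ τ : ℕ → Bool) (n : ℕ), (∀ i : Fin n, σ i = τ i) →
      dist (φ σ) (φ τ) ≤ 2 * ε n := by
    intro σ τ n h
    have heq : y σ n = y τ n := by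
      simp only [hydef]
      congr 1
      funext i
      exact h i
    have h1 := hmem σ n
    have h2 := hmem τ n
    rw [heq] at h1
    have := dist_triangle (φ σ) (y τ n) (φ τ)
    rw [dist_comm (y τ n) (φ τ)] at this
    linarith
  have hcont : Continuous φ := by
    rw [continuous_iff_continuousAt]
    intro σ
    rw [ContinuousAt, Metric.tendsto_nhds]
    intro e he
    obtain ⟨n, hn⟩ : ∃ n, 2 * ε n < e := by
      have := (hεtend.eventually (gt_mem_nhds (show (0:ℝ) < e/2 by linarith))).exists
      obtain ⟨n, hn⟩ := this
      exact ⟨n, by linarith⟩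
    have hUopen : IsOpen {τ : ℕ → Bool | ∀ i : Fin n, τ i = σ i} := by
      have : {τ : ℕ → Bool | ∀ i : Fin n, τ i = σ i} =
          ⋂ i : Fin n, {τ : ℕ → Bool | τ i = σ i} := by
        ext τ; simp
      rw [this]
      refine isOpen_iInter_of_finite fun i => ?_
      have : IsOpen ((fun τ : ℕ → Bool => τ (i:ℕ)) ⁻¹' ({σ (i:ℕ)} : Set Bool)) :=
        (isOpen_discrete _).preimage (continuous_apply (i:ℕ))
      exact this
    filter_upwards [hUopen.mem_nhds (fun i => rfl)] with τ hτ
    calc dist (φ τ) (φ σ) ≤ 2 * ε n := hclose τ σ n hτ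
    _ < e := hn
  refine ⟨Set.range φ, ⟨φ (fun _ => false), Set.mem_range_self _⟩, ⟨?_, ?_⟩, ?_⟩
  · exact (isCompact_range hcont).isClosed
  · rw [preperfect_iff_nhds]
    rintro _ ⟨σ, rfl⟩ U hU
    obtain ⟨e, he, hball⟩ := Metric.mem_nhds_iff.mp hU
    obtain ⟨n, hn⟩ : ∃ n, 2 * ε n < e := by
      have := (hεtend.eventually (gt_mem_nhds (show (0:ℝ) < e/2 by linarith))).exists
      obtain ⟨m, hm⟩ := this
      exact ⟨m, by linarith⟩
    set τ : ℕ → Bool := fun m => if m = n then !(σ n) else σ m with hτdef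
    have hτσ : τ ≠ σ := by
      intro h
      have := congrFun h n
      simp [hτdef] at this
    have hagree : ∀ i : Fin n, τ i = σ i := by
      intro i
      simp only [hτdef]
      rw [if_neg (Nat.ne_of_lt i.2)]
    refine ⟨φ τ, ⟨hball ?_, Set.mem_range_self _⟩, (hdiff τ σ hτσ 0).1⟩
    rw [Metric.mem_ball]
    calc dist (φ τ) (φ σ) ≤ 2 * ε n := hclose τ σ n hagree
    _ < e := hn
  · rintro _ ⟨σ, rfl⟩ _ ⟨τ, rfl⟩ hxy hmem'
    obtain ⟨m, hm⟩ := Set.mem_iUnion.mp hmem'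
    exact (hdiff σ τ (fun h => hxy (congrArg φ h)) m).2 hm

end Master

lemma isMeagre_of_isClosed_isNowhereDense {X : Type*} [TopologicalSpace X] {s : Set X}
    (hc : IsClosed s) (hnd : IsNowhereDense s) : IsMeagre s := by
  obtain ⟨ho, hd⟩ := isClosed_isNowhereDense_iff_compl.mp ⟨hc, hnd⟩
  exact residual_of_dense_open ho hd




/-- If `H` is a meager subgroup of an abelian Polish group `G`, then there is a nonempty
perfect set `P ⊆ G` intersecting each coset of `H` in at most one point, i.e. `x - y ∉ H`
for all distinct `x, y ∈ P`. -/
theorem exists_perfect_partial_transversal {G : Type*} [AddCommGroup G] [TopologicalSpace G]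
    [IsTopologicalAddGroup G] [PolishSpace G]
    (H : AddSubgroup G) (hH : IsMeagre (H : Set G)) :
    ∃ P : Set G, P.Nonempty ∧ Perfect P ∧
      ∀ x ∈ P, ∀ y ∈ P, x ≠ y → x - y ∉ H := by
  letI := TopologicalSpace.upgradeIsCompletelyMetrizable G
  have hzero : IsMeagre ({(0:G)} : Set G) :=
    hH.mono (Set.singleton_subset_iff.mpr H.zero_mem)
  obtain ⟨S, hSnd, hScount, hSsub⟩ := isMeagre_iff_countable_union_isNowhereDense.mp hH
  have hS'count : (insert (∅ : Set G) S).Countable := hScount.insert _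
  obtain ⟨f, hf⟩ := hS'count.exists_eq_range ⟨∅, Set.mem_insert _ _⟩
  have hfnd : ∀ i, IsNowhereDense (f i) := by
    intro i
    have : f i ∈ insert (∅ : Set G) S := hf ▸ Set.mem_range_self i
    rcases Set.mem_insert_iff.mp this with h | h
    · rw [h]; exact isNowhereDense_empty
    · exact hSnd _ h
  set F : ℕ → Set G := fun n => ⋃ i ∈ Finset.range (n+1), closure (f i) with hFdef
  have hFc : ∀ n, IsClosed (F n) := fun n =>
    isClosed_biUnion_finset fun i _ => isClosed_closure
  have hFm : ∀ n, IsMeagre (F n) := fun n =>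
    isMeagre_biUnion_finset fun i _ =>
      isMeagre_of_isClosed_isNowhereDense isClosed_closure (hfnd i).closure
  have hFmono : Monotone F := by
    intro a b hab
    exact Set.iUnion₂_mono' fun i hi =>
      ⟨i, Finset.mem_range.mpr (lt_of_lt_of_le (Finset.mem_range.mp hi) (by omega)),
        subset_rfl⟩
  have hcover : (H : Set G) ⊆ ⋃ n, F n := by
    intro z hz
    obtain ⟨t, htS, hzt⟩ := hSsub hz
    have : t ∈ insert (∅ : Set G) S := Set.mem_insert_of_mem _ htS
    rw [hf] at this
    obtain ⟨i, rfl⟩ := this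
    refine Set.mem_iUnion.mpr ⟨i, ?_⟩
    exact Set.mem_biUnion (Finset.self_mem_range_succ i) (subset_closure hzt)
  obtain ⟨P, hPne, hPperf, hPsep⟩ := master hzero hFc hFm hFmono
  exact ⟨P, hPne, hPperf, fun x hx y hy hxy hmem =>
    hPsep x hx y hy hxy (hcover hmem)⟩
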